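/- arXiv:2310.15444 — 2 statements merged into one kernel-verified Lean document; each statement's English description precedes it below -/
import Mathlib

section
/- Let Z be a measurable space, H a measurable hypothesis space, μ a probability measure on Z, N ≥ 1 an integer, M > 0, and l : H × Z → [0, M] a measurable loss. Let A be a Markov kernel from Z^N to H that is (ε, δ)-differentially private with ε ≥ 0 and δ ≥ 0. Then the expected generalization gap satisfies E_{S∼μ^{⊗N}} E_{h∼A(S)}[R(h) − R̂_S(h)] ≤ M·(1 − e^{−ε} + e^{−ε}·δ). -/
open MeasureTheory ProbabilityTheory

/-- Two datasets `S, S' ∈ Z^N` are neighboring if they differ in at most one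
coordinate. -/
def Neighboring {Z : Type*} {N : ℕ} (S S' : Fin N → Z) : Prop :=
  ∃ i : Fin N, ∀ j : Fin N, j ≠ i → S j = S' j

/-- A randomized algorithm is `(ε,δ)`-differentially private if for all
neighboring datasets `S, S'` and every measurable set `E` of outputs,
`P(A(S) ∈ E) ≤ e^ε · P(A(S') ∈ E) + δ`. -/
def IsDP {Z : Type*} [MeasurableSpace Z] {N : ℕ} {Ω : Type*} [MeasurableSpace Ω]
    (A : (Fin N → Z) → Measure Ω) (ε δ : ℝ) : Prop :=
  ∀ S S' : Fin N → Z, Neighboring S S' → ∀ E : Set Ω, MeasurableSet E →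
    A S E ≤ ENNReal.ofReal (Real.exp ε) * A S' E + ENNReal.ofReal δ

/-- The expected risk `R(h) = E_{z∼μ}[l(h,z)]`. -/
noncomputable def expRisk {Z H : Type*} [MeasurableSpace Z]
    (μ : Measure Z) (l : H → Z → ℝ) (h : H) : ℝ :=
  ∫ z, l h z ∂μ

/-- The empirical risk `R̂_S(h) = (1/N)·Σ_{i=1}^N l(h, z_i)`. -/
noncomputable def empRisk {Z H : Type*} {N : ℕ}
    (l : H → Z → ℝ) (S : Fin N → Z) (h : H) : ℝ :=
  (∑ i, l h (S i)) / N

section Aux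
open Set
open scoped ENNReal

lemma map_update_pi {Z : Type*} [MeasurableSpace Z] (μ : Measure Z) [IsProbabilityMeasure μ]
    {N : ℕ} (i : Fin N) :
    Measure.map (fun p : (Fin N → Z) × Z => Function.update p.1 i p.2)
      ((Measure.pi fun _ : Fin N => μ).prod μ) = Measure.pi fun _ : Fin N => μ := by
  refine (Measure.pi_eq fun s hs => ?_).symm
  rw [Measure.map_apply measurable_update' (MeasurableSet.univ_pi hs)]
  have hpre : (fun p : (Fin N → Z) × Z => Function.update p.1 i p.2) ⁻¹' (Set.pi Set.univ s)
      = (Set.pi Set.univ (Function.update s i Set.univ)) ×ˢ (s i) := by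
    ext p
    simp only [Set.mem_preimage, Set.mem_pi, Set.mem_univ, forall_true_left, Set.mem_prod]
    constructor
    · intro hp
      refine ⟨fun j => ?_, by simpa using hp i⟩
      by_cases hj : j = i
      · subst hj; simp
      · have := hp j
        rw [Function.update_of_ne hj] at this
        rw [Function.update_of_ne hj]
        exact this
    · rintro ⟨h1, h2⟩ j
      by_cases hj : j = i
      · subst hj; simpa using h2
      · have := h1 j
        rw [Function.update_of_ne hj] at this
        rw [Function.update_of_ne hj]
        exact this
  rw [hpre, Measure.prod_prod, Measure.pi_pi]
  have h1 : ∀ j, μ (Function.update s i Set.univ j) = Function.update (fun j => μ (s j)) i 1 j := by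
    intro j
    by_cases hj : j = i
    · subst hj; simp
    · rw [Function.update_of_ne hj, Function.update_of_ne hj]
  calc (∏ j, μ (Function.update s i Set.univ j)) * μ (s i)
      = (∏ j, Function.update (fun j => μ (s j)) i 1 j) * μ (s i) := by
        rw [Finset.prod_congr rfl fun j _ => h1 j]
    _ = (∏ j ∈ Finset.univ \ {i}, μ (s j)) * μ (s i) := by
        rw [Finset.prod_update_of_mem (Finset.mem_univ i), one_mul]
    _ = ∏ j, μ (s j) := by
        rw [mul_comm]
        exact (Finset.prod_eq_mul_prod_sdiff_singleton_of_mem (Finset.mem_univ i)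
          (fun j => μ (s j))).symm

lemma lintegral_update_pi {Z : Type*} [MeasurableSpace Z] (μ : Measure Z) [IsProbabilityMeasure μ]
    {N : ℕ} (i : Fin N) {f : (Fin N → Z) → ℝ≥0∞} (hf : Measurable f) :
    ∫⁻ S, f S ∂(Measure.pi fun _ : Fin N => μ)
      = ∫⁻ S, ∫⁻ z, f (Function.update S i z) ∂μ ∂(Measure.pi fun _ : Fin N => μ) := by
  conv_lhs => rw [← map_update_pi μ i]
  rw [lintegral_map hf measurable_update']
  exact lintegral_prod (fun p : (Fin N → Z) × Z => f (Function.update p.1 i p.2))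
    ((hf.comp measurable_update').aemeasurable)

lemma dp_lintegral {Ω : Type*} [MeasurableSpace Ω] (ν ν' : Measure Ω)
    {ε δ M : ℝ} (hM : 0 < M)
    (hDP : ∀ E : Set Ω, MeasurableSet E →
      ν E ≤ ENNReal.ofReal (Real.exp ε) * ν' E + ENNReal.ofReal δ)
    {f : Ω → ℝ} (hf : Measurable f) (h0 : ∀ ω, 0 ≤ f ω) (hfM : ∀ ω, f ω ≤ M) :
    ∫⁻ ω, ENNReal.ofReal (f ω) ∂ν ≤
      ENNReal.ofReal (Real.exp ε) * (∫⁻ ω, ENNReal.ofReal (f ω) ∂ν')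
        + ENNReal.ofReal M * ENNReal.ofReal δ := by
  have hmeas : ∀ t : ℝ, MeasurableSet {a | t < f a} :=
    fun t => measurableSet_lt measurable_const hf
  rw [lintegral_eq_lintegral_meas_lt ν (ae_of_all _ h0) hf.aemeasurable]
  have hstep : ∫⁻ t in Ioi (0:ℝ), ν {a | t < f a} = ∫⁻ t in Ioc 0 M, ν {a | t < f a} := by
    rw [← Ioc_union_Ioi_eq_Ioi hM.le,
      lintegral_union measurableSet_Ioi (Ioc_disjoint_Ioi le_rfl)]
    have hz : ∫⁻ t in Ioi M, ν {a | t < f a} = 0 := by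
      have hcong : ∀ᵐ t ∂(volume.restrict (Ioi M)), ν {a | t < f a} = 0 := by
        refine (ae_restrict_iff' measurableSet_Ioi).2 (ae_of_all _ fun t ht => ?_)
        have : {a | t < f a} = ∅ := by
          ext a
          simp only [mem_setOf_eq, mem_empty_iff_false, iff_false, not_lt]
          exact (hfM a).trans (le_of_lt ht)
        rw [this, measure_empty]
      rw [lintegral_congr_ae hcong, lintegral_zero]
    rw [hz, add_zero]
  rw [hstep]
  calc ∫⁻ t in Ioc (0:ℝ) M, ν {a | t < f a}
      ≤ ∫⁻ t in Ioc (0:ℝ) M,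
          (ENNReal.ofReal (Real.exp ε) * ν' {a | t < f a} + ENNReal.ofReal δ) :=
        lintegral_mono fun t => hDP _ (hmeas t)
    _ = ENNReal.ofReal (Real.exp ε) * (∫⁻ t in Ioc (0:ℝ) M, ν' {a | t < f a})
          + ENNReal.ofReal δ * volume (Ioc (0:ℝ) M) := by
        rw [lintegral_add_right _ measurable_const,
          lintegral_const_mul' _ _ ENNReal.ofReal_ne_top, setLIntegral_const]
    _ ≤ ENNReal.ofReal (Real.exp ε) * (∫⁻ t in Ioi (0:ℝ), ν' {a | t < f a})
          + ENNReal.ofReal M * ENNReal.ofReal δ := by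
        refine add_le_add ?_ ?_
        · exact mul_le_mul_right (lintegral_mono_set Ioc_subset_Ioi_self) _
        · rw [Real.volume_Ioc, sub_zero, mul_comm]
    _ = ENNReal.ofReal (Real.exp ε) * (∫⁻ ω, ENNReal.ofReal (f ω) ∂ν')
          + ENNReal.ofReal M * ENNReal.ofReal δ := by
        have hν' : ∫⁻ ω, ENNReal.ofReal (f ω) ∂ν' = ∫⁻ t in Ioi (0:ℝ), ν' {a | t < f a} :=
          lintegral_eq_lintegral_meas_lt ν' (ae_of_all _ h0) hf.aemeasurable
        rw [hν']

lemma integrable_of_bdd {α : Type*} [MeasurableSpace α] {ν : Measure α} [IsFiniteMeasure ν]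
    {f : α → ℝ} {C : ℝ} (hm : AEStronglyMeasurable f ν) (hb : ∀ x, |f x| ≤ C) :
    Integrable f ν :=
  Integrable.mono' (integrable_const C) hm (ae_of_all _ hb)

end Aux

open scoped ENNReal

/-- if a Markov kernel `A` from `Z^N` to `H` is
`(ε,δ)`-differentially private with `ε ≥ 0`, `δ ≥ 0`, and the measurable loss
satisfies `0 ≤ l ≤ M`, then the expected generalization gap satisfies
`E_{S∼μ^{⊗N}} E_{h∼A(S)}[R(h) − R̂_S(h)] ≤ M·(1 − e^{−ε} + e^{−ε}·δ)`. -/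
theorem stmt3 {Z H : Type*} [MeasurableSpace Z] [MeasurableSpace H]
    (μ : Measure Z) [IsProbabilityMeasure μ]
    (N : ℕ) (hN : 1 ≤ N) (M : ℝ) (hM : 0 < M)
    (l : H → Z → ℝ)
    (hl : Measurable (fun q : H × Z => l q.1 q.2))
    (hlb : ∀ h z, l h z ∈ Set.Icc (0 : ℝ) M)
    (A : Kernel (Fin N → Z) H) [IsMarkovKernel A]
    (ε δ : ℝ) (hε : 0 ≤ ε) (hδ : 0 ≤ δ)
    (hDP : IsDP (fun S => A S) ε δ) :
    ∫ S, (∫ h, (expRisk μ l h - empRisk l S h) ∂(A S))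
        ∂(Measure.pi fun _ : Fin N => μ) ≤
      M * (1 - Real.exp (-ε) + Real.exp (-ε) * δ) := by
  have hNpos : (0:ℝ) < N := by exact_mod_cast hN
  set π : Measure (Fin N → Z) := Measure.pi fun _ : Fin N => μ with hπ
  have h0 : ∀ h z, 0 ≤ l h z := fun h z => (hlb h z).1
  have hlM : ∀ h z, l h z ≤ M := fun h z => (hlb h z).2
  set G : (Fin N → Z) → Z → ℝ≥0∞ :=
    fun S z => ∫⁻ h, ENNReal.ofReal (l h z) ∂(A S) with hG
  -- joint measurability of G
  have hGmeas : Measurable fun p : (Fin N → Z) × Z => G p.1 p.2 := by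
    have hff : Measurable fun q : ((Fin N → Z) × Z) × H => ENNReal.ofReal (l q.2 q.1.2) :=
      ENNReal.measurable_ofReal.comp (hl.comp (measurable_snd.prodMk measurable_fst.snd))
    exact Measurable.lintegral_kernel_prod_right' (κ := A.prodMkRight Z) hff
  have hGle : ∀ S z, G S z ≤ ENNReal.ofReal M := by
    intro S z
    calc G S z ≤ ∫⁻ _, ENNReal.ofReal M ∂(A S) :=
          lintegral_mono fun h => ENNReal.ofReal_le_ofReal (hlM h z)
      _ = ENNReal.ofReal M := by rw [lintegral_const, measure_univ, mul_one]
  have hmeas1 : Measurable fun S => ∫⁻ z, G S z ∂μ :=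
    Measurable.lintegral_prod_right' hGmeas
  have hmeasUi : ∀ i : Fin N, Measurable fun S => G S (S i) := fun i =>
    hGmeas.comp (measurable_id.prodMk (measurable_pi_apply i))
  set T : ℝ≥0∞ := ∫⁻ S, ∫⁻ z, G S z ∂μ ∂π with hT
  set U : Fin N → ℝ≥0∞ := fun i => ∫⁻ S, G S (S i) ∂π with hU
  have hVle : ∀ S, (∫⁻ z, G S z ∂μ) ≤ ENNReal.ofReal M := by
    intro S
    calc (∫⁻ z, G S z ∂μ) ≤ ∫⁻ _, ENNReal.ofReal M ∂μ := lintegral_mono fun z => hGle S z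
      _ = ENNReal.ofReal M := by rw [lintegral_const, measure_univ, mul_one]
  have hTle : T ≤ ENNReal.ofReal M := by
    calc T ≤ ∫⁻ _, ENNReal.ofReal M ∂π := lintegral_mono hVle
      _ = ENNReal.ofReal M := by rw [lintegral_const, measure_univ, mul_one]
  have hUle : ∀ i, U i ≤ ENNReal.ofReal M := by
    intro i
    calc U i ≤ ∫⁻ _, ENNReal.ofReal M ∂π := lintegral_mono fun S => hGle S (S i)
      _ = ENNReal.ofReal M := by rw [lintegral_const, measure_univ, mul_one]
  -- the key DP + exchange inequality
  have hTU : ∀ i : Fin N, T ≤ ENNReal.ofReal (Real.exp ε) * U i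
      + ENNReal.ofReal M * ENNReal.ofReal δ := by
    intro i
    have hfmeas : Measurable fun S => G S (S i) := hmeasUi i
    have hexch : U i = ∫⁻ S, ∫⁻ z, G (Function.update S i z) z ∂μ ∂π := by
      rw [hU]
      simp only
      rw [lintegral_update_pi μ i hfmeas]
      refine lintegral_congr fun S => lintegral_congr fun z => ?_
      rw [Function.update_self]
    have hmeas2 : Measurable fun S => ∫⁻ z, G (Function.update S i z) z ∂μ :=
      Measurable.lintegral_prod_right'
        (hGmeas.comp (measurable_update'.prodMk measurable_snd))
    have hpoint : ∀ S z, G S z ≤ ENNReal.ofReal (Real.exp ε) * G (Function.update S i z) z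
        + ENNReal.ofReal M * ENNReal.ofReal δ := by
      intro S z
      have hnb : Neighboring S (Function.update S i z) :=
        ⟨i, fun j hj => (Function.update_of_ne hj z S).symm⟩
      have hdp' : ∀ E : Set H, MeasurableSet E →
          A S E ≤ ENNReal.ofReal (Real.exp ε) * A (Function.update S i z) E
            + ENNReal.ofReal δ := fun E hE => hDP S (Function.update S i z) hnb E hE
      exact dp_lintegral (A S) (A (Function.update S i z)) hM hdp'
        (hl.comp (measurable_id.prodMk measurable_const)) (fun h => h0 h z)
        (fun h => hlM h z)
    calc T ≤ ∫⁻ S, ∫⁻ z, (ENNReal.ofReal (Real.exp ε) * G (Function.update S i z) z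
          + ENNReal.ofReal M * ENNReal.ofReal δ) ∂μ ∂π :=
        lintegral_mono fun S => lintegral_mono fun z => hpoint S z
      _ = ∫⁻ S, (ENNReal.ofReal (Real.exp ε) * (∫⁻ z, G (Function.update S i z) z ∂μ)
          + ENNReal.ofReal M * ENNReal.ofReal δ) ∂π := by
        refine lintegral_congr fun S => ?_
        rw [lintegral_add_right _ measurable_const,
          lintegral_const_mul' _ _ ENNReal.ofReal_ne_top, lintegral_const,
          measure_univ, mul_one]
      _ = ENNReal.ofReal (Real.exp ε) * (∫⁻ S, ∫⁻ z, G (Function.update S i z) z ∂μ ∂π)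
          + ENNReal.ofReal M * ENNReal.ofReal δ := by
        rw [lintegral_add_right _ measurable_const,
          lintegral_const_mul' _ _ ENNReal.ofReal_ne_top, lintegral_const,
          measure_univ, mul_one]
      _ = ENNReal.ofReal (Real.exp ε) * U i + ENNReal.ofReal M * ENNReal.ofReal δ := by
        rw [hexch]
  -- real-valued quantities
  set t : ℝ := T.toReal with ht
  set u : Fin N → ℝ := fun i => (U i).toReal with hu
  have hTne : T ≠ ⊤ := ne_top_of_le_ne_top ENNReal.ofReal_ne_top hTle
  have hUne : ∀ i, U i ≠ ⊤ := fun i => ne_top_of_le_ne_top ENNReal.ofReal_ne_top (hUle i)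
  have htM : t ≤ M := by
    rw [ht]
    exact ENNReal.toReal_le_of_le_ofReal hM.le hTle
  have huM : ∀ i, u i ≤ M := fun i => ENNReal.toReal_le_of_le_ofReal hM.le (hUle i)
  have htu : ∀ i, t ≤ Real.exp ε * u i + M * δ := by
    intro i
    have h1 := ENNReal.toReal_mono (by
        exact ENNReal.add_ne_top.2 ⟨ENNReal.mul_ne_top ENNReal.ofReal_ne_top (hUne i),
          ENNReal.mul_ne_top ENNReal.ofReal_ne_top ENNReal.ofReal_ne_top⟩) (hTU i)
    rw [ENNReal.toReal_add (ENNReal.mul_ne_top ENNReal.ofReal_ne_top (hUne i))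
        (ENNReal.mul_ne_top ENNReal.ofReal_ne_top ENNReal.ofReal_ne_top),
      ENNReal.toReal_mul, ENNReal.toReal_mul,
      ENNReal.toReal_ofReal (Real.exp_pos ε).le,
      ENNReal.toReal_ofReal hM.le, ENNReal.toReal_ofReal hδ] at h1
    exact h1
  -- integrability and measurability for the real integrals
  have hlintble : ∀ h : H, Integrable (fun z => l h z) μ := by
    intro h
    refine integrable_of_bdd (C := M) ((hl.comp (measurable_const.prodMk measurable_id)
      : Measurable fun z : Z => l h z)).aestronglyMeasurable (fun z => ?_)
    rw [abs_of_nonneg (h0 h z)]; exact hlM h z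
  have hexpRisk_meas : StronglyMeasurable (expRisk μ l) :=
    hl.stronglyMeasurable.integral_prod_right'
  have hexpRisk_nonneg : ∀ h, 0 ≤ expRisk μ l h := fun h =>
    integral_nonneg fun z => h0 h z
  have hexpRisk_le : ∀ h, expRisk μ l h ≤ M := by
    intro h
    calc expRisk μ l h ≤ ∫ _, M ∂μ :=
        integral_mono (hlintble h) (integrable_const M) fun z => hlM h z
      _ = M := by rw [integral_const, probReal_univ, one_smul]
  have hempRisk_meas : ∀ S : Fin N → Z, Measurable fun h => empRisk l S h := by
    intro S
    exact (Finset.measurable_sum Finset.univ fun i _ =>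
      hl.comp (measurable_id.prodMk measurable_const)).div_const _
  have hempRisk_nonneg : ∀ (S : Fin N → Z) (h : H), 0 ≤ empRisk l S h := by
    intro S h
    exact div_nonneg (Finset.sum_nonneg fun i _ => h0 h (S i)) (Nat.cast_nonneg N)
  have hempRisk_le : ∀ (S : Fin N → Z) (h : H), empRisk l S h ≤ M := by
    intro S h
    rw [empRisk, div_le_iff₀ hNpos]
    calc ∑ i, l h (S i) ≤ ∑ _i : Fin N, M := Finset.sum_le_sum fun i _ => hlM h (S i)
      _ = N * M := by rw [Finset.sum_const, Finset.card_univ, Fintype.card_fin, nsmul_eq_mul]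
      _ = M * N := mul_comm _ _
  -- Step A : pointwise identity for the inner integral
  have hStepA : ∀ S : Fin N → Z, (∫ h, (expRisk μ l h - empRisk l S h) ∂(A S))
      = (∫⁻ z, G S z ∂μ).toReal - (∑ i, (G S (S i)).toReal) / N := by
    intro S
    have hintexp : Integrable (expRisk μ l) (A S) := by
      refine integrable_of_bdd (C := M) hexpRisk_meas.aestronglyMeasurable (fun h => ?_)
      rw [abs_of_nonneg (hexpRisk_nonneg h)]; exact hexpRisk_le h
    have hintemp : Integrable (fun h => empRisk l S h) (A S) := by
      refine integrable_of_bdd (C := M) (hempRisk_meas S).aestronglyMeasurable (fun h => ?_)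
      rw [abs_of_nonneg (hempRisk_nonneg S h)]; exact hempRisk_le S h
    rw [integral_sub hintexp hintemp]
    have hexp_eq : ∫ h, expRisk μ l h ∂(A S) = (∫⁻ z, G S z ∂μ).toReal := by
      rw [integral_eq_lintegral_of_nonneg_ae (ae_of_all _ hexpRisk_nonneg)
        hexpRisk_meas.aestronglyMeasurable]
      congr 1
      have hswap : ∫⁻ h, ∫⁻ z, ENNReal.ofReal (l h z) ∂μ ∂(A S)
          = ∫⁻ z, ∫⁻ h, ENNReal.ofReal (l h z) ∂(A S) ∂μ := by
        refine lintegral_lintegral_swap ?_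
        exact (ENNReal.measurable_ofReal.comp hl).aemeasurable
      rw [← hswap]
      refine lintegral_congr fun h => ?_
      rw [expRisk, ← ofReal_integral_eq_lintegral_ofReal (hlintble h)
        (ae_of_all _ fun z => h0 h z)]
    have hemp_eq : ∫ h, empRisk l S h ∂(A S) = (∑ i, (G S (S i)).toReal) / N := by
      simp only [empRisk]
      rw [integral_div]
      congr 1
      rw [integral_finset_sum _ (fun i _ => ?_)]
      · refine Finset.sum_congr rfl fun i _ => ?_
        rw [integral_eq_lintegral_of_nonneg_ae (ae_of_all _ fun h => h0 h (S i))
          (hl.comp (measurable_id.prodMk measurable_const)).aestronglyMeasurable]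
      · refine integrable_of_bdd (C := M)
          (hl.comp (measurable_id.prodMk measurable_const)).aestronglyMeasurable
          (fun h => ?_)
        rw [abs_of_nonneg (h0 h (S i))]; exact hlM h (S i)
    rw [hexp_eq, hemp_eq]
  -- Step B : compute the outer integral
  have hf1int : Integrable (fun S => (∫⁻ z, G S z ∂μ).toReal) π := by
    refine integrable_of_bdd (C := M) hmeas1.ennreal_toReal.aestronglyMeasurable (fun S => ?_)
    rw [abs_of_nonneg ENNReal.toReal_nonneg]
    exact ENNReal.toReal_le_of_le_ofReal hM.le (hVle S)
  have hfiint : ∀ i : Fin N, Integrable (fun S => (G S (S i)).toReal) π := by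
    intro i
    refine integrable_of_bdd (C := M) (hmeasUi i).ennreal_toReal.aestronglyMeasurable (fun S => ?_)
    rw [abs_of_nonneg ENNReal.toReal_nonneg]
    exact ENNReal.toReal_le_of_le_ofReal hM.le (hGle S (S i))
  have hf2int : Integrable (fun S => (∑ i, (G S (S i)).toReal) / (N:ℝ)) π := by
    exact (integrable_finset_sum _ fun i _ => hfiint i).div_const _
  have hLHS : ∫ S, (∫ h, (expRisk μ l h - empRisk l S h) ∂(A S)) ∂π
      = t - (∑ i, u i) / N := by
    rw [integral_congr_ae (ae_of_all _ hStepA), integral_sub hf1int hf2int]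
    congr 1
    · rw [ht, hT]
      exact integral_toReal hmeas1.aemeasurable
        (ae_of_all _ fun S => lt_of_le_of_lt (hVle S) ENNReal.ofReal_lt_top)
    · rw [integral_div, integral_finset_sum _ fun i _ => hfiint i]
      congr 1
      refine Finset.sum_congr rfl fun i _ => ?_
      rw [hu]
      simp only
      rw [hU]
      exact integral_toReal (hmeasUi i).aemeasurable
        (ae_of_all _ fun S => lt_of_le_of_lt (hGle S (S i)) ENNReal.ofReal_lt_top)
  rw [hLHS]
  -- final arithmetic
  set a : ℝ := Real.exp (-ε) with ha
  have ha1 : a ≤ 1 := Real.exp_le_one_iff.2 (neg_nonpos.2 hε)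
  have haexp : a * Real.exp ε = 1 := by
    rw [ha, ← Real.exp_add, neg_add_cancel, Real.exp_zero]
  have hapos : 0 < a := Real.exp_pos _
  have hper : ∀ i : Fin N, t - u i ≤ M * (1 - a + a * δ) := by
    intro i
    have h2 : a * t ≤ a * (Real.exp ε * u i + M * δ) :=
      mul_le_mul_of_nonneg_left (htu i) hapos.le
    have h3 : a * t ≤ u i + a * (M * δ) := by
      calc a * t ≤ a * (Real.exp ε * u i + M * δ) := h2
        _ = (a * Real.exp ε) * u i + a * (M * δ) := by ring
        _ = u i + a * (M * δ) := by rw [haexp, one_mul]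
    nlinarith [mul_nonneg (sub_nonneg.2 ha1) (sub_nonneg.2 htM), h3]
  have hsum : t - (∑ i, u i) / N = (∑ i : Fin N, (t - u i)) / N := by
    rw [Finset.sum_sub_distrib, Finset.sum_const, Finset.card_univ, Fintype.card_fin,
      nsmul_eq_mul]
    field_simp
  rw [hsum]
  rw [div_le_iff₀ hNpos]
  calc ∑ i : Fin N, (t - u i) ≤ ∑ _i : Fin N, M * (1 - a + a * δ) :=
      Finset.sum_le_sum fun i _ => hper i
    _ = N * (M * (1 - a + a * δ)) := by
        rw [Finset.sum_const, Finset.card_univ, Fintype.card_fin, nsmul_eq_mul]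
    _ = M * (1 - a + a * δ) * N := by ring
end

section
/- (Laplace mechanism.) Let Z be a measurable space, N ≥ 1, d ≥ 1, b > 0, and let f : Z^N → ℝ^d be a measurable map with ℓ1-sensitivity at most Δ, i.e. ‖f(S) − f(S')‖₁ ≤ Δ for all neighboring datasets S, S' ∈ Z^N. Then the Markov kernel sending S to the Laplace distribution Lap(f(S), b) on ℝ^d is (Δ/b, 0)-differentially private: for all neighboring S, S' and every measurable set E ⊆ ℝ^d, Lap(f(S), b)(E) ≤ e^{Δ/b}·Lap(f(S'), b)(E). -/
open MeasureTheory

/-- Density of the `d`-dimensional Laplace distribution `Lap(μ, b)` with respect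
to Lebesgue measure: `(2b)^{-d}·exp(−‖x−μ‖₁/b)`. -/
noncomputable def lapDensity (d : ℕ) (μ : Fin d → ℝ) (b : ℝ) (x : Fin d → ℝ) : ℝ :=
  ((2 * b) ^ d)⁻¹ * Real.exp (-(∑ i, |x i - μ i|) / b)

/-- The `d`-dimensional Laplace distribution `Lap(μ, b)` on `ℝ^d`. -/
noncomputable def lapMeasure (d : ℕ) (μ : Fin d → ℝ) (b : ℝ) : Measure (Fin d → ℝ) :=
  MeasureTheory.volume.withDensity (fun x => ENNReal.ofReal (lapDensity d μ b x))

/-- Laplace mechanism: if `f : Z^N → ℝ^d` is measurable with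
ℓ1-sensitivity at most `Δ` over neighboring datasets, then the mechanism
`S ↦ Lap(f(S), b)` is `(Δ/b, 0)`-differentially private. -/
theorem stmt5 {Z : Type*} [MeasurableSpace Z] (N d : ℕ) (hN : 1 ≤ N) (hd : 1 ≤ d)
    (b : ℝ) (hb : 0 < b) (Δ : ℝ)
    (f : (Fin N → Z) → Fin d → ℝ) (hf : Measurable f)
    (hsens : ∀ S S' : Fin N → Z, Neighboring S S' →
      ∑ i, |f S i - f S' i| ≤ Δ) :
    IsDP (fun S => lapMeasure d (f S) b) (Δ / b) 0 := by
  intro S S' hnb E hE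
  simp only [lapMeasure, withDensity_apply _ hE, ENNReal.ofReal_zero, add_zero]
  rw [← lintegral_const_mul' _ _ ENNReal.ofReal_ne_top]
  refine setLIntegral_mono' hE fun x _ => ?_
  rw [← ENNReal.ofReal_mul (Real.exp_nonneg _)]
  apply ENNReal.ofReal_le_ofReal
  unfold lapDensity
  rw [← mul_assoc, mul_comm (Real.exp (Δ / b)), mul_assoc]
  apply mul_le_mul_of_nonneg_left _ (by positivity)
  rw [← Real.exp_add]
  apply Real.exp_le_exp.2
  rw [← add_div, div_le_div_iff_of_pos_right hb]
  have h1 : ∑ i, |x i - f S' i| ≤ (∑ i, |x i - f S i|) + ∑ i, |f S i - f S' i| := by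
    rw [← Finset.sum_add_distrib]
    exact Finset.sum_le_sum fun i _ => by
      have := abs_sub_abs_le_abs_sub (x i - f S' i) (x i - f S i)
      have h2 := abs_sub (x i - f S' i) (x i - f S i)
      calc |x i - f S' i| = |(x i - f S i) + (f S i - f S' i)| := by ring_nf
        _ ≤ |x i - f S i| + |f S i - f S' i| := abs_add_le _ _
  linarith [hsens S S' hnb]
end
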